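/- Defining a_0 = 1 and a_{k+1} = 2^{a_k + 1} - 1, the FCF recurrence sets N_k satisfy {1, ..., a_k} ⊆ N_k for all k; hence producing FCF encodings of all integers below n requires only O(log* n) iterations, i.e., the least k with a_k ≥ n satisfies k ≤ C + log*(n) for a constant C. -/

import Mathlib

def FCF : ℕ → Finset ℕ
  | 0 => {1}
  | k + 1 =>
    ((insert 1 ((FCF k).image (2 ^ ·))).powerset.filter (fun S => S.Nonempty)).image
      (fun S => S.sum id)

def a : ℕ → ℕ
  | 0 => 1
  | k + 1 => 2 ^ (a k + 1) - 1

/-- The iterated logarithm: the least number of times log₂ must be applied to reach ≤ 1. -/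
noncomputable def logStar (n : ℕ) : ℕ := sInf {k : ℕ | Nat.log2^[k] n ≤ 1}

lemma FCF_sub : ∀ k : ℕ, Finset.Icc 1 (a k) ⊆ FCF k := by
  intro k
  induction k with
  | zero => intro n hn; simp [a] at hn; simp [FCF, hn]
  | succ k ih =>
    intro n hn
    rw [Finset.mem_Icc] at hn
    obtain ⟨h1, h2⟩ := hn
    set s : Finset ℕ := n.bitIndices.toFinset with hs
    have hsum : ∑ i ∈ s, 2 ^ i = n := Finset.twoPowSum_toFinset_bitIndices n
    have hns : s.Nonempty := by
      rcases Finset.eq_empty_or_nonempty s with h | h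
      · exfalso; rw [h] at hsum; simp at hsum; omega
      · exact h
    have hbound : ∀ i ∈ s, i ≤ a k := by
      intro i hi
      have h2p : 2 ^ i ≤ n := by
        rw [← hsum]
        exact Finset.single_le_sum (fun j _ => Nat.zero_le _) hi
      by_contra hcon
      push_neg at hcon
      have : 2 ^ (a k + 1) ≤ 2 ^ i := Nat.pow_le_pow_right (by norm_num) hcon
      have hpos : 1 ≤ 2 ^ (a k + 1) := Nat.one_le_two_pow
      simp only [a] at h2
      omega
    rw [show FCF (k + 1) =
        ((insert 1 ((FCF k).image (2 ^ ·))).powerset.filter (fun S => S.Nonempty)).image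
          (fun S => S.sum id) from rfl]
    rw [Finset.mem_image]
    refine ⟨s.image (2 ^ ·), ?_, ?_⟩
    · rw [Finset.mem_filter, Finset.mem_powerset]
      constructor
      · intro x hx
        rw [Finset.mem_image] at hx
        obtain ⟨i, hi, rfl⟩ := hx
        rcases Nat.eq_zero_or_pos i with h0 | h0
        · subst h0; simp
        · refine Finset.mem_insert_of_mem ?_
          exact Finset.mem_image_of_mem _ (ih (Finset.mem_Icc.2 ⟨h0, hbound i hi⟩))
      · exact hns.image _
    · rw [Finset.sum_image (fun x _ y _ h => Nat.pow_right_injective (by norm_num) h)]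
      simpa using hsum

lemma log2_iter_le (t : ℕ) : ∀ n : ℕ, Nat.log2^[t] n ≤ 1 → n ≤ a t := by
  induction t with
  | zero => intro n h; simpa [a] using h
  | succ t ih =>
    intro n h
    rw [Function.iterate_succ_apply] at h
    have hlog : Nat.log2 n ≤ a t := ih _ h
    rcases Nat.eq_zero_or_pos n with h0 | h0
    · omega
    have : n < 2 ^ (Nat.log2 n + 1) := by
      rw [Nat.log2_eq_log_two]
      exact Nat.lt_pow_succ_log_self (by norm_num) n
    have : 2 ^ (Nat.log2 n + 1) ≤ 2 ^ (a t + 1) := Nat.pow_le_pow_right (by norm_num) (by omega)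
    simp only [a]
    omega

lemma log2_iter_self (n : ℕ) : Nat.log2^[n] n ≤ 1 := by
  induction n using Nat.strong_induction_on with
  | _ n ih =>
    match n with
    | 0 => simp
    | 1 => simp [Nat.log2]; decide
    | (m + 2) =>
      rw [Function.iterate_succ_apply]
      have hlt : Nat.log2 (m + 2) ≤ m + 1 := by
        have := Nat.log2_eq_log_two (n := m + 2)
        have h2 : Nat.log 2 (m + 2) < m + 2 := Nat.log_lt_self 2 (by omega)
        omega
      calc Nat.log2^[m+1] (Nat.log2 (m + 2))
          ≤ Nat.log2^[m+1] (m + 1) := by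
            apply Monotone.iterate (f := Nat.log2) ?_ (m+1) hlt
            intro x y hxy
            simp only [Nat.log2_eq_log_two]
            exact Nat.log_mono_right hxy
        _ ≤ 1 := ih (m + 1) (by omega)

theorem FCF_logstar_iterations :
    (∀ k : ℕ, Finset.Icc 1 (a k) ⊆ FCF k) ∧
    ∃ C : ℕ, ∀ n : ℕ, 1 ≤ n → sInf {k : ℕ | n ≤ a k} ≤ C + logStar n := by
  refine ⟨FCF_sub, 0, fun n hn => ?_⟩
  have hne : {k : ℕ | Nat.log2^[k] n ≤ 1}.Nonempty := ⟨n, log2_iter_self n⟩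
  have hmem : Nat.log2^[logStar n] n ≤ 1 := Nat.sInf_mem hne
  have : n ≤ a (logStar n) := log2_iter_le _ n hmem
  simpa using Nat.sInf_le (show logStar n ∈ {k : ℕ | n ≤ a k} from this)
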